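/- Best reply of player x at the catching threshold (case b of Theorem 2, middle branch of B_x): assume pλ > 0, 0 < d0 := d_x(x0, y0) < d < d_y(x0, y0), where d = T·(v_max − v_min) and v_min < v_max, and let v_y := v_max − d0/T (which belongs to Γ). Then for every w ∈ Γ, u_x(x0, w, y0, v_y) ≤ u_x(x0, v_max, y0, v_y), and u_x(x0, v_max, y0, v_y) = pλ·D/2 − c·T; i.e., v_max is a best reply of player x to v_y, achieved by exactly catching up with player y. -/

import Mathlib

/-- The reduction of a real number `r` modulo the circuit length `D`: the relative
position on the torus, `(r) mod D = r − D·⌊r/D⌋ ∈ [0, D)`. -/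
noncomputable def modD (D r : ℝ) : ℝ := r - D * (⌊r / D⌋ : ℝ)

/-- The directed (clockwise) distance from `x` to `y` on the circuit of length `D`. -/
noncomputable def dirX (D x y : ℝ) : ℝ := if x ≤ y then y - x else D + y - x

/-- The directed (clockwise) distance from `y` to `x` on the circuit of length `D`. -/
noncomputable def dirY (D x y : ℝ) : ℝ := dirX D y x

/-- Utility of player x: starting from `x0` and `y0`, driving at speeds `vx`, `vy`
for time `T`, with fare `p`, passenger rate `lam` and cost rate `c`. -/
noncomputable def uX (D p lam c T x0 y0 vx vy : ℝ) : ℝ :=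
  if modD D (x0 + T * vx) ≠ modD D (y0 + T * vy) then
    p * lam * dirX D (modD D (x0 + T * vx)) (modD D (y0 + T * vy)) - c * T
  else p * lam * (D / 2) - c * T

/-- Utility of player y, defined like `uX` with the directed distance `dirY`. -/
noncomputable def uY (D p lam c T x0 y0 vx vy : ℝ) : ℝ :=
  if modD D (x0 + T * vx) ≠ modD D (y0 + T * vy) then
    p * lam * dirY D (modD D (x0 + T * vx)) (modD D (y0 + T * vy)) - c * T
  else p * lam * (D / 2) - c * T


lemma modD_eq_self {D r : ℝ} (hD : 0 < D) (h0 : 0 ≤ r) (h1 : r < D) : modD D r = r := by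
  unfold modD
  have h : ⌊r / D⌋ = 0 := by
    rw [Int.floor_eq_zero_iff]
    constructor
    · positivity
    · rw [div_lt_one hD]; exact h1
  rw [h]; simp

lemma modD_eq_sub {D r : ℝ} (hD : 0 < D) (h0 : D ≤ r) (h1 : r < 2 * D) : modD D r = r - D := by
  unfold modD
  have h : ⌊r / D⌋ = 1 := by
    rw [Int.floor_eq_iff]
    constructor
    · rw [le_div_iff₀ hD]; push_cast; linarith
    · rw [div_lt_iff₀ hD]; norm_num; linarith
  rw [h]; push_cast; ring

lemma modD_sub_D {D r : ℝ} (hD : 0 < D) : modD D (r - D) = modD D r := by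
  unfold modD
  have hne : D ≠ 0 := ne_of_gt hD
  have h : (r - D) / D = r / D - 1 := by field_simp
  rw [h]
  have h2 : ⌊r / D - 1⌋ = ⌊r / D⌋ - 1 := by
    have := Int.floor_sub_intCast (r / D) 1
    push_cast at this
    exact_mod_cast this
  rw [h2]; push_cast; ring

lemma key_dir {D x0 α β : ℝ} (hD : 0 < D) (hx0 : 0 ≤ x0) (hx0' : x0 < D)
    (hα : 0 ≤ α) (hαβ : α < β) (hβ : β < D / 2) :
    modD D (x0 + α) ≠ modD D (x0 + β) ∧
    dirX D (modD D (x0 + α)) (modD D (x0 + β)) = β - α := by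
  rcases lt_or_ge (x0 + β) D with h1 | h1
  · rw [modD_eq_self hD (by linarith) (by linarith), modD_eq_self hD (by linarith) h1]
    refine ⟨by intro h; linarith, ?_⟩
    rw [dirX, if_pos (by linarith)]; ring
  · rcases lt_or_ge (x0 + α) D with h2 | h2
    · rw [modD_eq_self hD (by linarith) h2, modD_eq_sub hD h1 (by linarith)]
      refine ⟨by intro h; linarith, ?_⟩
      rw [dirX, if_neg (not_le.mpr (by linarith))]; ring
    · rw [modD_eq_sub hD h2 (by linarith), modD_eq_sub hD h1 (by linarith)]
      refine ⟨by intro h; linarith, ?_⟩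
      rw [dirX, if_pos (by linarith)]; ring

/-- Best reply of player x at the catching threshold: against v_y = v_max − d₀/T
(which lies in Γ), v_max is a best reply of player x, achieved by exactly catching up
with player y, with payoff pλ·D/2 − c·T. -/
theorem best_reply_x_middle_branch
    (D p lam c T vmin vmax x0 y0 d0 d : ℝ)
    (hD : 0 < D) (hvmin : 0 < vmin) (hvv : vmin < vmax) (hT : 0 < T)
    (hshort : T * vmax < D / 2)
    (hp : 0 ≤ p) (hlam : 0 < lam) (hc : 0 ≤ c) (hplam : 0 < p * lam)
    (hx0 : x0 ∈ Set.Ico 0 D) (hy0 : y0 ∈ Set.Ico 0 D)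
    (hd0 : d0 = dirX D x0 y0) (hd : d = T * (vmax - vmin))
    (hd0pos : 0 < d0) (hd0d : d0 < d) (hdy : d < dirY D x0 y0) :
    vmax - d0 / T ∈ Set.Icc vmin vmax ∧
    (∀ w ∈ Set.Icc vmin vmax,
      uX D p lam c T x0 y0 w (vmax - d0 / T) ≤
        uX D p lam c T x0 y0 vmax (vmax - d0 / T)) ∧
    uX D p lam c T x0 y0 vmax (vmax - d0 / T) = p * lam * (D / 2) - c * T := by
  obtain ⟨hx0a, hx0b⟩ := hx0
  obtain ⟨hy0a, hy0b⟩ := hy0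
  have hTne : T ≠ 0 := ne_of_gt hT
  have hyx : modD D (y0 + T * (vmax - d0 / T)) = modD D (x0 + T * vmax) := by
    have he : y0 + T * (vmax - d0 / T) = y0 + T * vmax - d0 := by field_simp; ring
    rw [he, hd0, dirX]
    split_ifs with h
    · congr 1; ring
    · rw [show y0 + T * vmax - (D + y0 - x0) = (x0 + T * vmax) - D by ring, modD_sub_D hD]
  have hval : uX D p lam c T x0 y0 vmax (vmax - d0 / T) = p * lam * (D / 2) - c * T := by
    unfold uX; rw [hyx]; simp
  refine ⟨⟨?_, ?_⟩, ?_, hval⟩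
  · rw [le_sub_iff_add_le, ← sub_nonneg]
    have : d0 / T < vmax - vmin := by rw [div_lt_iff₀ hT]; nlinarith [hd0d, hd]
    linarith
  · have : 0 < d0 / T := div_pos hd0pos hT
    linarith
  · intro w hw
    obtain ⟨hw1, hw2⟩ := hw
    rcases eq_or_lt_of_le hw2 with heq | hlt
    · rw [heq]
    · obtain ⟨hne, hdir⟩ := key_dir (α := T * w) (β := T * vmax) hD hx0a hx0b
        (mul_nonneg hT.le (by linarith)) (by nlinarith) hshort
      rw [hval]
      unfold uX
      rw [hyx, if_pos hne, hdir]
      have hw0 : 0 ≤ T * w := mul_nonneg hT.le (by linarith)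
      nlinarith [hshort, hplam]
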